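/- arXiv:1004.1506 — 2 statements merged into one kernel-verified Lean document; each statement's English description precedes it below -/
import Mathlib

section
/- Let B be the open unit ball of ℂⁿ for a norm ‖·‖. Then the Carathéodory pseudodistance satisfies c_B(0, z) = arctanh(‖z‖) for all z ∈ B. -/
open Complex Metric Set

/-- The inverse hyperbolic tangent. -/
noncomputable def arctanh (x : ℝ) : ℝ := (1/2) * Real.log ((1 + x) / (1 - x))

/-- The Poincaré distance on the unit disc (explicit formula). -/
noncomputable def poincareDist (a b : ℂ) : ℝ :=
  arctanh ‖(a - b) / (1 - (starRingEnd ℂ) b * a)‖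

/-- The Carathéodory pseudodistance of a domain `D` in a complex normed space. -/
noncomputable def caratheodoryDist {E : Type*} [NormedAddCommGroup E] [NormedSpace ℂ E]
    (D : Set E) (z w : E) : ℝ :=
  sSup {d : ℝ | ∃ φ : E → ℂ, DifferentiableOn ℂ φ D ∧ MapsTo φ D (ball 0 1) ∧
    d = poincareDist (φ z) (φ w)}

lemma arctanh_mono {s t : ℝ} (hs : 0 ≤ s) (hst : s ≤ t) (ht : t < 1) :
    arctanh s ≤ arctanh t := by
  unfold arctanh
  have h1 : (0:ℝ) < 1 - t := by linarith
  have h2 : (0:ℝ) < 1 - s := by linarith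
  have hx : (0:ℝ) < (1 + s) / (1 - s) := by positivity
  have hle : (1 + s) / (1 - s) ≤ (1 + t) / (1 - t) := by
    rw [div_le_div_iff₀ h2 h1]; nlinarith
  have := Real.log_le_log hx hle
  linarith

lemma normSq_identity (a w : ℂ) :
    Complex.normSq (1 - (starRingEnd ℂ) a * w) - Complex.normSq (w - a)
      = (1 - Complex.normSq a) * (1 - Complex.normSq w) := by
  simp only [Complex.normSq_apply, Complex.sub_re, Complex.sub_im, Complex.mul_re,
    Complex.mul_im, Complex.conj_re, Complex.conj_im, Complex.one_re, Complex.one_im]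
  ring

lemma mobius_lt_one {a w : ℂ} (ha : ‖a‖ < 1) (hw : ‖w‖ < 1) :
    ‖(w - a) / (1 - (starRingEnd ℂ) a * w)‖ < 1 := by
  have h1 : Complex.normSq (w - a) < Complex.normSq (1 - (starRingEnd ℂ) a * w) := by
    have hid := normSq_identity a w
    have ha2 : Complex.normSq a < 1 := by
      rw [Complex.normSq_eq_norm_sq]; nlinarith [norm_nonneg a]
    have hw2 : Complex.normSq w < 1 := by
      rw [Complex.normSq_eq_norm_sq]; nlinarith [norm_nonneg w]
    nlinarith
  have h2 : ‖w - a‖ < ‖1 - (starRingEnd ℂ) a * w‖ := by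
    have e1 := Complex.normSq_eq_norm_sq (w - a)
    have e2 := Complex.normSq_eq_norm_sq (1 - (starRingEnd ℂ) a * w)
    nlinarith [norm_nonneg (w - a), norm_nonneg (1 - (starRingEnd ℂ) a * w)]
  rw [norm_div, div_lt_one ((norm_nonneg _).trans_lt h2)]
  exact h2

lemma one_sub_conj_mul_ne_zero {a w : ℂ} (ha : ‖a‖ < 1) (hw : ‖w‖ < 1) :
    1 - (starRingEnd ℂ) a * w ≠ 0 := by
  intro h
  have h1 : (starRingEnd ℂ) a * w = 1 := by linear_combination -h
  have h2 : ‖(starRingEnd ℂ) a * w‖ = 1 := by rw [h1]; simp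
  rw [norm_mul, Complex.norm_conj] at h2
  nlinarith [norm_nonneg a, norm_nonneg w]

lemma schwarz_pick {E : Type*} [NormedAddCommGroup E] [NormedSpace ℂ E]
    {φ : E → ℂ} (hd : DifferentiableOn ℂ φ (ball 0 1))
    (hm : MapsTo φ (ball (0:E) 1) (ball (0:ℂ) 1)) {z : E} (hz : z ∈ ball (0:E) 1) :
    ‖(φ 0 - φ z) / (1 - (starRingEnd ℂ) (φ z) * φ 0)‖ ≤ ‖z‖ := by
  rcases eq_or_ne z 0 with rfl | hz0
  · simp
  have hr0 : (0:ℝ) < ‖z‖ := norm_pos_iff.mpr hz0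
  have hr1 : ‖z‖ < 1 := mem_ball_zero_iff.mp hz
  set r : ℝ := ‖z‖ with hr
  set u : E := ((r:ℂ))⁻¹ • z with hu
  have hrc : ((r:ℂ)) ≠ 0 := by exact_mod_cast Complex.ofReal_ne_zero.mpr hr0.ne'
  have hun : ‖u‖ = 1 := by
    rw [hu, norm_smul, norm_inv, Complex.norm_real, Real.norm_eq_abs, abs_of_pos hr0]
    field_simp
    exact hr.symm
  set a : ℂ := φ 0 with haa
  have ha : ‖a‖ < 1 := by
    have := hm (mem_ball_self one_pos)
    rwa [mem_ball_zero_iff] at this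
  set F : ℂ → ℂ := fun ζ => φ (ζ • u) with hF
  have hmap' : MapsTo (fun ζ : ℂ => ζ • u) (ball (0:ℂ) 1) (ball (0:E) 1) := by
    intro ζ hζ
    rw [mem_ball_zero_iff] at hζ ⊢
    rw [norm_smul, hun, mul_one]; exact hζ
  have hFd : DifferentiableOn ℂ F (ball 0 1) :=
    hd.comp ((differentiable_id.smul_const u).differentiableOn) hmap'
  have hFm : ∀ ζ ∈ ball (0:ℂ) 1, ‖F ζ‖ < 1 := by
    intro ζ hζ
    have := hm (hmap' hζ)
    rwa [mem_ball_zero_iff] at this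
  set h : ℂ → ℂ := fun ζ => (F ζ - a) / (1 - (starRingEnd ℂ) a * F ζ) with hh
  have hhd : DifferentiableOn ℂ h (ball 0 1) := by
    apply DifferentiableOn.div (hFd.sub_const a)
      ((differentiableOn_const 1).sub ((differentiableOn_const _).mul hFd))
    intro ζ hζ
    exact one_sub_conj_mul_ne_zero ha (hFm ζ hζ)
  have hhm : MapsTo h (ball (0:ℂ) 1) (ball (0:ℂ) 1) := by
    intro ζ hζ
    rw [mem_ball_zero_iff]
    exact mobius_lt_one ha (hFm ζ hζ)
  have hF0 : F 0 = a := by rw [hF]; simp [haa]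
  have hh0 : h 0 = 0 := by rw [hh]; simp [hF0]
  have key := Complex.norm_le_norm_of_mapsTo_ball hhd (hhm.mono_right ball_subset_closedBall) hh0
    (z := (r:ℂ)) (by rwa [Complex.norm_real, Real.norm_eq_abs, abs_of_pos hr0])
  have hru : ((r:ℂ)) • u = z := by
    rw [hu, smul_smul, mul_inv_cancel₀ hrc, one_smul]
  have hFr : F ((r:ℂ)) = φ z := by rw [hF]; simp [hru]
  have key2 : ‖(φ z - a) / (1 - (starRingEnd ℂ) a * φ z)‖ ≤ r := by
    have := key
    rw [hh] at this
    simp only [hFr] at this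
    rwa [Complex.norm_real, Real.norm_eq_abs, abs_of_pos hr0] at this
  have hconv : ‖(φ 0 - φ z) / (1 - (starRingEnd ℂ) (φ z) * φ 0)‖ =
      ‖(φ z - a) / (1 - (starRingEnd ℂ) a * φ z)‖ := by
    rw [norm_div, norm_div, ← haa, norm_sub_rev]
    congr 1
    rw [← Complex.norm_conj (1 - (starRingEnd ℂ) a * φ z)]
    congr 1
    simp only [map_sub, map_one, map_mul, Complex.conj_conj]
    ring
  rw [hconv]; exact key2

theorem caratheodory_dist_unit_ball_from_origin
    {E : Type*} [NormedAddCommGroup E] [NormedSpace ℂ E] [FiniteDimensional ℂ E]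
    (z : E) (hz : z ∈ ball (0 : E) 1) :
    caratheodoryDist (ball (0 : E) 1) 0 z = arctanh ‖z‖ := by
  have hz1 : ‖z‖ < 1 := mem_ball_zero_iff.mp hz
  unfold caratheodoryDist
  set S := {d : ℝ | ∃ φ : E → ℂ, DifferentiableOn ℂ φ (ball 0 1) ∧
    MapsTo φ (ball 0 1) (ball 0 1) ∧ d = poincareDist (φ 0) (φ z)} with hS
  have hub : ∀ d ∈ S, d ≤ arctanh ‖z‖ := by
    rintro d ⟨φ, hd, hm, rfl⟩
    unfold poincareDist
    exact arctanh_mono (norm_nonneg _) (schwarz_pick hd hm hz) hz1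
  have hmem : arctanh ‖z‖ ∈ S := by
    rcases eq_or_ne z 0 with rfl | hz0
    · refine ⟨fun _ => 0, differentiableOn_const 0, fun w _ => mem_ball_self one_pos, ?_⟩
      simp [poincareDist]
    · obtain ⟨ℓ, hℓn, hℓz⟩ := exists_dual_vector ℂ z (norm_ne_zero_iff.mpr hz0)
      refine ⟨fun w => ℓ w, ℓ.differentiable.differentiableOn, ?_, ?_⟩
      · intro w hw
        rw [mem_ball_zero_iff] at hw ⊢
        calc ‖ℓ w‖ ≤ ‖ℓ‖ * ‖w‖ := ℓ.le_opNorm w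
        _ = ‖w‖ := by rw [hℓn, one_mul]
        _ < 1 := hw
      · simp only [map_zero, hℓz, poincareDist]
        simp [Complex.norm_of_nonneg (norm_nonneg z)]
  exact le_antisymm (csSup_le ⟨_, hmem⟩ hub) (le_csSup ⟨arctanh ‖z‖, hub⟩ hmem)
end

section
/- For n ≥ 2, the polydisc Δⁿ = {z ∈ ℂⁿ : |zᵢ| < 1 for all i} and the Euclidean ball Bₙ = {z ∈ ℂⁿ : |z₁|² + ... + |zₙ|² < 1} are not biholomorphically equivalent. -/
open Complex Metric Set

private lemma mobius_normSq (a ζ : ℂ) :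
    Complex.normSq (1 - (starRingEnd ℂ) a * ζ) - Complex.normSq (ζ - a)
      = (1 - Complex.normSq a) * (1 - Complex.normSq ζ) := by
  simp only [Complex.normSq_apply, Complex.sub_re, Complex.sub_im, Complex.mul_re,
    Complex.mul_im, Complex.conj_re, Complex.conj_im, Complex.one_re, Complex.one_im]
  ring

/-- A Schwarz–Pick type estimate. -/
private lemma schwarz_pick_est {h : ℂ → ℂ} (hd : DifferentiableOn ℂ h (ball 0 1))
    (hm : MapsTo h (ball 0 1) (ball 0 1)) {z : ℂ} (hz : z ∈ ball (0:ℂ) 1) :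
    (1 - ‖z‖) * ‖h z - h 0‖ ≤
      ‖z‖ * (1 - (‖h 0‖)^2) := by
  have h0mem : (0:ℂ) ∈ ball (0:ℂ) 1 := by simp
  set a : ℂ := h 0 with ha
  have haa : ‖a‖ < 1 := by simpa using mem_ball_zero_iff.1 (hm h0mem)
  set φ : ℂ → ℂ := fun ζ => (ζ - a) / (1 - (starRingEnd ℂ) a * ζ) with hφ
  have hden : ∀ ζ : ℂ, ‖ζ‖ < 1 → 1 - (starRingEnd ℂ) a * ζ ≠ 0 := by
    intro ζ hζ
    have : ‖(starRingEnd ℂ) a * ζ‖ < 1 := by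
      rw [norm_mul, Complex.norm_conj]
      calc ‖a‖ * ‖ζ‖ ≤ 1 * ‖ζ‖ := by
            exact mul_le_mul_of_nonneg_right haa.le (norm_nonneg ζ)
        _ < 1 := by simpa using hζ
    intro hc
    rw [sub_eq_zero] at hc
    rw [← hc] at this
    simp at this
  have hφmaps : ∀ ζ : ℂ, ‖ζ‖ < 1 → ‖φ ζ‖ < 1 := by
    intro ζ hζ
    rw [hφ]
    simp only [norm_div]
    rw [div_lt_one (norm_pos_iff.2 (hden ζ hζ))]
    have h1 : Complex.normSq (ζ - a) < Complex.normSq (1 - (starRingEnd ℂ) a * ζ) := by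
      have := mobius_normSq a ζ
      nlinarith [Complex.normSq_nonneg a, Complex.normSq_nonneg ζ,
        (Complex.sq_norm a) ▸ (pow_lt_one₀ (norm_nonneg a) haa two_ne_zero),
        (Complex.sq_norm ζ) ▸ (pow_lt_one₀ (norm_nonneg ζ) hζ two_ne_zero)]
    have := Real.sqrt_lt_sqrt (Complex.normSq_nonneg _) h1
    simpa [Complex.norm_def] using this
  -- ψ = φ ∘ h satisfies Schwarz's lemma
  have hψd : DifferentiableOn ℂ (fun ζ => φ (h ζ)) (ball 0 1) := by
    apply DifferentiableOn.div
    · exact (hd.sub_const a)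
    · exact (differentiableOn_const _).sub ((differentiableOn_const _).mul hd)
    · intro ζ hζ
      exact hden (h ζ) (by simpa using mem_ball_zero_iff.1 (hm hζ))
  have hψm : MapsTo (fun ζ => φ (h ζ)) (ball 0 1) (ball 0 1) := by
    intro ζ hζ
    exact mem_ball_zero_iff.2 (by simpa using hφmaps (h ζ) (by simpa using mem_ball_zero_iff.1 (hm hζ)))
  have hψ0 : φ (h 0) = 0 := by simp [hφ, ha]
  have hschwarz : ‖φ (h z)‖ ≤ ‖z‖ :=
    Complex.norm_le_norm_of_mapsTo_ball_self hψd (hψm.mono_right ball_subset_closedBall) hψ0 (by simpa using mem_ball_zero_iff.1 hz)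
  -- unfold: h z - a = φ (h z) * (1 - conj a * h z)
  have hhz : ‖h z‖ < 1 := by simpa using mem_ball_zero_iff.1 (hm hz)
  have hkey : h z - a = φ (h z) * (1 - (starRingEnd ℂ) a * h z) := by
    rw [hφ]
    field_simp [hden (h z) hhz]
    rw [mul_div_assoc, div_self (by rw [mul_comm (h z) _]; exact hden (h z) hhz), mul_one]
  have hbound : ‖1 - (starRingEnd ℂ) a * h z‖
      ≤ (1 - (‖a‖)^2) + ‖a‖ * ‖h z - a‖ := by
    have : (1 : ℂ) - (starRingEnd ℂ) a * h z
        = (1 - (starRingEnd ℂ) a * a) + (starRingEnd ℂ) a * (a - h z) := by ring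
    rw [this]
    refine (norm_add_le _ _).trans ?_
    have h1 : (1 : ℂ) - (starRingEnd ℂ) a * a = ((1 - (‖a‖)^2 : ℝ) : ℂ) := by
      have : (starRingEnd ℂ) a * a = ((Complex.normSq a : ℝ) : ℂ) := by
        rw [mul_comm, Complex.mul_conj]
      rw [this, ← Complex.sq_norm]
      push_cast
      ring
    rw [h1, Complex.norm_real, Real.norm_eq_abs,
      _root_.abs_of_nonneg (by nlinarith [norm_nonneg a] : (0:ℝ) ≤ 1 - (‖a‖)^2),
      norm_mul, Complex.norm_conj, norm_sub_rev a (h z)]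
  -- combine
  have hcomb : ‖h z - a‖ ≤ ‖z‖ * ((1 - (‖a‖)^2)
      + ‖a‖ * ‖h z - a‖) := by
    calc ‖h z - a‖ = ‖φ (h z)‖ * ‖1 - (starRingEnd ℂ) a * h z‖ := by
          rw [hkey, norm_mul]
      _ ≤ ‖z‖ * ((1 - (‖a‖)^2) + ‖a‖ * ‖h z - a‖) := by
          apply mul_le_mul hschwarz hbound (norm_nonneg _) (norm_nonneg _)
  have hzabs : ‖z‖ < 1 := by simpa using mem_ball_zero_iff.1 hz
  nlinarith [norm_nonneg z, norm_nonneg (h z - a), norm_nonneg a,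
    mul_le_mul_of_nonneg_left haa.le (mul_nonneg (norm_nonneg z) (norm_nonneg (h z - a)))]

set_option maxHeartbeats 1000000 in
/-- Poincaré's theorem: for `n ≥ 2`, the polydisc and the Euclidean ball in `ℂⁿ`
are not biholomorphically equivalent. -/
theorem polydisc_not_biholomorphic_to_ball (n : ℕ) (hn : 2 ≤ n) :
    ¬ ∃ f g : EuclideanSpace ℂ (Fin n) → EuclideanSpace ℂ (Fin n),
      DifferentiableOn ℂ f {z : EuclideanSpace ℂ (Fin n) | ∀ i, ‖z i‖ < 1} ∧
      MapsTo f {z : EuclideanSpace ℂ (Fin n) | ∀ i, ‖z i‖ < 1}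
        (ball (0 : EuclideanSpace ℂ (Fin n)) 1) ∧
      DifferentiableOn ℂ g (ball (0 : EuclideanSpace ℂ (Fin n)) 1) ∧
      MapsTo g (ball (0 : EuclideanSpace ℂ (Fin n)) 1)
        {z : EuclideanSpace ℂ (Fin n) | ∀ i, ‖z i‖ < 1} ∧
      (∀ z ∈ {z : EuclideanSpace ℂ (Fin n) | ∀ i, ‖z i‖ < 1}, g (f z) = z) ∧
      (∀ w ∈ ball (0 : EuclideanSpace ℂ (Fin n)) 1, f (g w) = w) := by
  rintro ⟨f, g, hf, hfm, hg, hgm, hgf, hfg⟩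
  set D : Set (EuclideanSpace ℂ (Fin n)) :=
    {z : EuclideanSpace ℂ (Fin n) | ∀ i, ‖z i‖ < 1} with hD
  set i0 : Fin n := ⟨0, by omega⟩ with hi0
  set i1 : Fin n := ⟨1, by omega⟩ with hi1
  have hi01 : i0 ≠ i1 := by simp [hi0, hi1, Fin.ext_iff]
  set e : ℂ → ℂ → EuclideanSpace ℂ (Fin n) := fun ζ w =>
    ζ • EuclideanSpace.single i0 (1:ℂ) + w • EuclideanSpace.single i1 (1:ℂ) with he
  have heapp : ∀ ζ w : ℂ, ∀ i : Fin n,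
      e ζ w i = ζ * (if i = i0 then 1 else 0) + w * (if i = i1 then 1 else 0) := by
    intro ζ w i
    simp [he, EuclideanSpace.single_apply]
  have heD : ∀ ζ w : ℂ, ‖ζ‖ < 1 → ‖w‖ < 1 → e ζ w ∈ D := by
    intro ζ w hζ hw i
    rw [heapp]
    by_cases h0 : i = i0
    · rw [if_pos h0, if_neg (h0 ▸ hi01), mul_one, mul_zero, add_zero]
      exact hζ
    · rw [if_neg h0, mul_zero, zero_add]
      by_cases h1 : i = i1
      · rw [if_pos h1, mul_one]; exact hw
      · rw [if_neg h1, mul_zero]; simp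
  -- properness
  have prop : ∀ δ : ℝ, 0 < δ → δ < 1 → ∃ r : ℝ, 0 ≤ r ∧ r < 1 ∧
      ∀ z ∈ D, r < ‖z i1‖ → 1 - δ < ‖f z‖ := by
    intro δ hδ0 hδ1
    have hsub : closedBall (0 : EuclideanSpace ℂ (Fin n)) (1-δ) ⊆ ball 0 1 :=
      closedBall_subset_ball (by linarith)
    have hK : IsCompact (g '' closedBall (0 : EuclideanSpace ℂ (Fin n)) (1-δ)) :=
      (isCompact_closedBall _ _).image_of_continuousOn (hg.continuousOn.mono hsub)
    have hKne : (g '' closedBall (0 : EuclideanSpace ℂ (Fin n)) (1-δ)).Nonempty :=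
      ⟨g 0, ⟨0, by simp; linarith, rfl⟩⟩
    obtain ⟨m, hmK, hmax⟩ := hK.exists_isMaxOn hKne
      ((continuous_norm.comp (EuclideanSpace.proj i1).continuous).continuousOn)
    refine ⟨‖m i1‖, norm_nonneg _, ?_, ?_⟩
    · obtain ⟨y, hy, rfl⟩ := hmK
      exact (hgm (hsub hy)) i1
    · intro z hz hr
      by_contra hc
      push_neg at hc
      have hmem : z ∈ g '' closedBall 0 (1-δ) :=
        ⟨f z, mem_closedBall_zero_iff.2 hc, hgf z hz⟩
      exact absurd (hmax hmem) (not_le.2 hr)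
  have habs_half : ‖(1/2 : ℂ)‖ < 1 := by
    rw [norm_div]; simp; norm_num
  have habs_half' : ‖(1/2 : ℂ)‖ = 1/2 := by
    rw [norm_div]; simp
  -- key estimate
  have key : ∀ ε : ℝ, 0 < ε → ∃ r : ℝ, 0 ≤ r ∧ r < 1 ∧ ∀ w : ℂ, ‖w‖ < 1 →
      r < ‖w‖ → ‖f (e 0 w) - f (e (1/2) w)‖ ≤ ε := by
    intro ε hε
    set δ : ℝ := min (ε^2/24) (min (ε/2) (1/2)) with hδdef
    have hδ0 : 0 < δ := by positivity
    have hδhalf : δ ≤ 1/2 := (min_le_right _ _).trans (min_le_right _ _)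
    have hδε2 : δ ≤ ε/2 := (min_le_right _ _).trans (min_le_left _ _)
    have hδε24 : δ ≤ ε^2/24 := min_le_left _ _
    have hδ1 : δ < 1 := lt_of_le_of_lt hδhalf (by norm_num)
    obtain ⟨r, hr0, hr1, hprop⟩ := prop δ hδ0 hδ1
    refine ⟨r, hr0, hr1, ?_⟩
    intro w hw1 hwr
    have hx0D : e 0 w ∈ D := heD 0 w (by simp) hw1
    have hx1D : e (1/2) w ∈ D := heD (1/2) w habs_half hw1
    set p := f (e 0 w) with hp
    set x := f (e (1/2) w) with hx
    have hpb : ‖p‖ < 1 := mem_ball_zero_iff.1 (hfm hx0D)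
    have hxb : ‖x‖ < 1 := mem_ball_zero_iff.1 (hfm hx1D)
    have hcoord : ∀ ζ : ℂ, (e ζ w) i1 = w := by
      intro ζ; rw [heapp, if_neg (Ne.symm hi01), if_pos rfl, mul_zero, mul_one, zero_add]
    have hpl : 1 - δ < ‖p‖ := hprop _ hx0D (by rw [hcoord]; exact hwr)
    have hp0 : 0 < ‖p‖ := by linarith
    set q : EuclideanSpace ℂ (Fin n) := ((‖p‖ : ℂ))⁻¹ • p with hq
    have hqn : ‖q‖ = 1 := by
      rw [hq, norm_smul, norm_inv, Complex.norm_real, Real.norm_eq_abs,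
        abs_of_pos hp0, inv_mul_cancel₀ hp0.ne']
    set h : ℂ → ℂ := fun ζ => @inner ℂ _ _ q (f (e ζ w)) with hh
    have hh0 : h 0 = (‖p‖ : ℂ) := by
      rw [hh]
      simp only [← hp, hq, inner_smul_left, inner_self_eq_norm_sq_to_K, map_inv₀,
        Complex.conj_ofReal]
      field_simp
      rw [sq]; exact mul_div_cancel_right₀ _ (Complex.ofReal_ne_zero.2 hp0.ne')
    have hhd : DifferentiableOn ℂ h (ball 0 1) := by
      apply DifferentiableOn.comp (g := fun y : EuclideanSpace ℂ (Fin n) => @inner ℂ _ _ q y)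
        ((innerSL ℂ q).differentiable.differentiableOn)
      · apply hf.comp
        · exact ((differentiable_id.smul_const _).add_const _).differentiableOn
        · intro ζ hζ
          exact heD ζ w (mem_ball_zero_iff.1 hζ) hw1
      · exact mapsTo_univ _ _
    have hhm : MapsTo h (ball 0 1) (ball 0 1) := by
      intro ζ hζ
      rw [mem_ball_zero_iff]
      calc ‖h ζ‖ ≤ ‖q‖ * ‖f (e ζ w)‖ := norm_inner_le_norm _ _
        _ < 1 := by
            rw [hqn, one_mul]
            exact mem_ball_zero_iff.1 (hfm (heD ζ w (mem_ball_zero_iff.1 hζ) hw1))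
    have hSP := schwarz_pick_est hhd hhm (mem_ball_zero_iff.2 (show ‖(1/2 : ℂ)‖ < 1 from habs_half))
    rw [hh0, Complex.norm_real, Real.norm_eq_abs, abs_of_pos hp0, habs_half'] at hSP
    have habs2 : ‖h (1/2) - (‖p‖:ℂ)‖ ≤ 1 - ‖p‖^2 := by
      nlinarith [norm_nonneg (h (1/2) - (‖p‖:ℂ))]
    have hre : 1 - 3*δ ≤ (h (1/2)).re := by
      have h1 : 1 - ‖p‖^2 ≤ 2*δ := by nlinarith
      have h2 := Complex.abs_re_le_norm (h (1/2) - (‖p‖:ℂ))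
      have h3 : (h (1/2) - (‖p‖:ℂ)).re = (h (1/2)).re - ‖p‖ := by simp
      rw [h3] at h2
      have h4 := neg_abs_le ((h (1/2)).re - ‖p‖)
      nlinarith
    -- strict convexity estimate
    have hxq : ‖x - q‖^2 ≤ 6*δ := by
      have hns := @norm_sub_sq ℂ _ _ _ _ x q
      have hsymm : RCLike.re (@inner ℂ _ _ x q) = (h (1/2)).re := by
        rw [← inner_conj_symm]
        simp only [hh, ← hx]
        norm_num
        exact inner_re_symm (𝕜 := ℂ) x q
      rw [hsymm] at hns
      nlinarith [norm_nonneg x]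
    have hxq2 : ‖x - q‖ ≤ ε/2 := by
      have h6 : 6*δ ≤ (ε/2)^2 := by nlinarith
      nlinarith [norm_nonneg (x - q), sq_nonneg (‖x - q‖ - ε/2), sq_nonneg (‖x - q‖ + ε/2)]
    have hpq : ‖p - q‖ ≤ δ := by
      have hpdiff : p - q = (1 - ((‖p‖:ℂ))⁻¹) • p := by rw [hq, sub_smul, one_smul]
      have hinv1 : 1 ≤ ‖p‖⁻¹ := by
        rw [le_inv_comm₀ one_pos hp0]
        simpa using hpb.le
      have h1 : ‖(1 - ((‖p‖:ℂ))⁻¹)‖ = ‖p‖⁻¹ - 1 := by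
        rw [← Complex.ofReal_one, ← Complex.ofReal_inv, ← Complex.ofReal_sub,
          Complex.norm_real, Real.norm_eq_abs, abs_of_nonpos (by linarith)]
        ring
      rw [hpdiff, norm_smul, h1]
      have h2 : (‖p‖⁻¹ - 1) * ‖p‖ = 1 - ‖p‖ := by field_simp
      rw [h2]; linarith
    calc ‖p - x‖ = ‖(p - q) + (q - x)‖ := by rw [sub_add_sub_cancel]
      _ ≤ ‖p - q‖ + ‖q - x‖ := norm_add_le _ _
      _ ≤ δ + ε/2 := by rw [norm_sub_rev q x]; exact add_le_add hpq hxq2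
      _ ≤ ε := by linarith
  -- the slice difference function and the maximum principle
  set u : ℂ → EuclideanSpace ℂ (Fin n) := fun w => f (e 0 w) - f (e (1/2) w) with hu
  have hud : DifferentiableOn ℂ u (ball (0:ℂ) 1) := by
    have h1 : ∀ ζ : ℂ, ‖ζ‖ < 1 →
        DifferentiableOn ℂ (fun w => f (e ζ w)) (ball (0:ℂ) 1) := by
      intro ζ hζ
      apply hf.comp
      · exact ((differentiable_id.smul_const _).const_add _).differentiableOn
      · intro w hw
        exact heD ζ w hζ (mem_ball_zero_iff.1 hw)
    exact (h1 0 (by simp)).sub (h1 (1/2) habs_half)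
  have husmall : ∀ ε : ℝ, 0 < ε → ‖u 0‖ ≤ ε := by
    intro ε hε
    obtain ⟨r, hr0, hr1, hkey⟩ := key ε hε
    set ρ : ℝ := (r+1)/2 with hρ
    have hρ0 : 0 < ρ := by rw [hρ]; linarith
    have hρ1 : ρ < 1 := by rw [hρ]; linarith
    have hρr : r < ρ := by rw [hρ]; linarith
    have hdc : DiffContOnCl ℂ u (ball (0:ℂ) ρ) := by
      apply DifferentiableOn.diffContOnCl
      apply hud.mono
      rw [closure_ball (0:ℂ) hρ0.ne']
      exact closedBall_subset_ball hρ1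
    have hfr : ∀ z ∈ frontier (ball (0:ℂ) ρ), ‖u z‖ ≤ ε := by
      intro z hz
      rw [frontier_ball (0:ℂ) hρ0.ne'] at hz
      have hza : ‖z‖ = ρ := by
        simpa using mem_sphere_zero_iff_norm.1 hz
      exact hkey z (by rw [hza]; exact hρ1) (by rw [hza]; exact hρr)
    exact Complex.norm_le_of_forall_mem_frontier_norm_le isBounded_ball hdc hfr
      (subset_closure (mem_ball_self hρ0))
  have hu0 : u 0 = 0 := by
    by_contra hne
    have hpos : 0 < ‖u 0‖ := norm_pos_iff.2 hne
    have := husmall (‖u 0‖/2) (by linarith)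
    linarith
  have heq : e 0 0 = e (1/2) 0 := by
    have h1 : f (e 0 0) = f (e (1/2) 0) := by
      have : f (e 0 0) - f (e (1/2) 0) = 0 := hu0
      rwa [sub_eq_zero] at this
    calc e 0 0 = g (f (e 0 0)) := (hgf _ (heD 0 0 (by simp) (by simp))).symm
      _ = g (f (e (1/2) 0)) := by rw [h1]
      _ = e (1/2) 0 := hgf _ (heD (1/2) 0 habs_half (by simp))
  have hcoord0 : ∀ ζ : ℂ, (e ζ 0) i0 = ζ := by
    intro ζ
    rw [heapp, if_pos rfl, if_neg hi01, mul_one, mul_zero, add_zero]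
  have hbad : (0:ℂ) = 1/2 := by
    have h2 := congrArg (fun z : EuclideanSpace ℂ (Fin n) => z i0) heq
    simp only [hcoord0] at h2
    exact h2
  norm_num at hbad
end
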